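/- Let ε ≥ 0 and R > 0, and let w, ψ : ℝ × ℝ² → ℝ be smooth functions such that for every t ∈ ℝ: on Ω, ∂_t(w − ε·Δw) = (1/R)·Δw + R·ψ_θ + J(ψ, w − ε·Δw), and on ∂Ω, w(t,·) = 0 and ψ(t,·) = 0. Then for every t, (1/2)·(d/dt)( ‖w‖² + ε‖∇w‖² ) = −(1/R)·‖∇w‖² + R·⟨ψ_θ, w⟩ + ε·⟨J(Δw, ψ), w⟩, where all spatial norms and inner products are taken at time t. -/

import Mathlib

open MeasureTheory

noncomputable section

/-- Partial derivative with respect to the first (x) variable. -/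
def pdx (f : ℝ × ℝ → ℝ) : ℝ × ℝ → ℝ := fun p => deriv (fun x => f (x, p.2)) p.1

/-- Partial derivative with respect to the second (y) variable. -/
def pdy (f : ℝ × ℝ → ℝ) : ℝ × ℝ → ℝ := fun p => deriv (fun y => f (p.1, y)) p.2

/-- The Laplacian Δf = f_xx + f_yy. -/
def lap (f : ℝ × ℝ → ℝ) : ℝ × ℝ → ℝ := fun p => pdx (pdx f) p + pdy (pdy f) p

/-- The azimuthal derivative f_θ = x f_y − y f_x. -/
def azim (f : ℝ × ℝ → ℝ) : ℝ × ℝ → ℝ := fun p => p.1 * pdy f p - p.2 * pdx f p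

/-- The Jacobian (advection) bilinear form J(f,g) = f_x g_y − f_y g_x. -/
def jac (f g : ℝ × ℝ → ℝ) : ℝ × ℝ → ℝ := fun p => pdx f p * pdy g p - pdy f p * pdx g p

/-- The open unit disk Ω. -/
def disk : Set (ℝ × ℝ) := {p | p.1 ^ 2 + p.2 ^ 2 < 1}

/-- The unit circle ∂Ω. -/
def bdry : Set (ℝ × ℝ) := {p | p.1 ^ 2 + p.2 ^ 2 = 1}

/-- The L² inner product ⟨f,g⟩ = ∫_Ω f g dA. -/
def ip (f g : ℝ × ℝ → ℝ) : ℝ := ∫ p in disk, f p * g p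

/-- The squared L² norm ‖f‖² over Ω. -/
def nsq (f : ℝ × ℝ → ℝ) : ℝ := ∫ p in disk, (f p) ^ 2

/-- The squared L² norm of the gradient: ‖∇f‖² = ‖f_x‖² + ‖f_y‖². -/
def gradNsq (f : ℝ × ℝ → ℝ) : ℝ := nsq (pdx f) + nsq (pdy f)

def cdisk : Set (ℝ × ℝ) := {p | p.1 ^ 2 + p.2 ^ 2 ≤ 1}

lemma measurable_disk : MeasurableSet disk :=
  (isOpen_lt (by fun_prop) continuous_const).measurableSet

lemma compact_cdisk : IsCompact cdisk := by
  apply Metric.isCompact_of_isClosed_isBounded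
  · exact isClosed_le (by fun_prop) continuous_const
  · apply (Metric.isBounded_closedBall (x := ((0:ℝ),(0:ℝ))) (r := 1)).subset
    intro p hp
    simp only [Metric.mem_closedBall, Prod.dist_eq, dist_zero_right, Real.norm_eq_abs]
    have h1 : p.1^2 ≤ 1 := by nlinarith [sq_nonneg p.2, hp.out]
    have h2 : p.2^2 ≤ 1 := by nlinarith [sq_nonneg p.1, hp.out]
    rw [sup_le_iff]
    constructor <;> (rw [abs_le]; constructor <;> nlinarith)

lemma intg {f : ℝ × ℝ → ℝ} (hf : Continuous f) : IntegrableOn f disk volume := by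
  have : IntegrableOn f cdisk volume :=
    hf.continuousOn.integrableOn_compact compact_cdisk
  exact this.mono_set (fun p hp => (le_of_lt hp : p.1^2+p.2^2 ≤ 1))

lemma disk_vol_lt_top : volume disk < ⊤ :=
  lt_of_le_of_lt (measure_mono (fun p (hp : p.1^2+p.2^2 < 1) => (le_of_lt hp : p ∈ cdisk))) compact_cdisk.measure_lt_top

variable {E F : Type*} [NormedAddCommGroup E] [NormedSpace ℝ E]
  [NormedAddCommGroup F] [NormedSpace ℝ F]

def dd (v : E) (f : E → ℝ) : E → ℝ := fun x => fderiv ℝ f x v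

lemma diff_of_contDiff {f : E → F} (hf : ContDiff ℝ (⊤:ℕ∞) f) : Differentiable ℝ f :=
  hf.differentiable (by simp)

lemma contDiff_dd {f : E → ℝ} (hf : ContDiff ℝ (⊤:ℕ∞) f) (v : E) :
    ContDiff ℝ (⊤:ℕ∞) (dd v f) := by
  have h1 : ContDiff ℝ (⊤:ℕ∞) (fderiv ℝ f) := (contDiff_infty_iff_fderiv.1 hf).2
  exact h1.clm_apply contDiff_const

lemma hasDerivAt_sec_y (f : ℝ×ℝ→ℝ) (hf : Differentiable ℝ f) (x y : ℝ) :
    HasDerivAt (fun y' => f (x, y')) (dd ((0:ℝ),(1:ℝ)) f (x,y)) y := by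
  have h : HasDerivAt (fun y' => ((x, y') : ℝ×ℝ)) (((0:ℝ),(1:ℝ))) y :=
    (hasDerivAt_const y x).prodMk (hasDerivAt_id y)
  exact (hf (x,y)).hasFDerivAt.comp_hasDerivAt y h

lemma hasDerivAt_sec_x (f : ℝ×ℝ→ℝ) (hf : Differentiable ℝ f) (x y : ℝ) :
    HasDerivAt (fun x' => f (x', y)) (dd ((1:ℝ),(0:ℝ)) f (x,y)) x := by
  have h : HasDerivAt (fun x' => ((x', y) : ℝ×ℝ)) (((1:ℝ),(0:ℝ))) x :=
    (hasDerivAt_id x).prodMk (hasDerivAt_const x y)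
  exact (hf (x,y)).hasFDerivAt.comp_hasDerivAt x h

lemma pdy_eq {f : ℝ×ℝ→ℝ} (hf : Differentiable ℝ f) (p : ℝ×ℝ) :
    pdy f p = dd ((0:ℝ),(1:ℝ)) f p :=
  (hasDerivAt_sec_y f hf p.1 p.2).deriv

lemma pdx_eq {f : ℝ×ℝ→ℝ} (hf : Differentiable ℝ f) (p : ℝ×ℝ) :
    pdx f p = dd ((1:ℝ),(0:ℝ)) f p :=
  (hasDerivAt_sec_x f hf p.1 p.2).deriv

lemma contDiff_pdx {f : ℝ×ℝ→ℝ} (hf : ContDiff ℝ (⊤:ℕ∞) f) : ContDiff ℝ (⊤:ℕ∞) (pdx f) := by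
  rw [show pdx f = dd ((1:ℝ),(0:ℝ)) f from funext (pdx_eq (diff_of_contDiff hf))]
  exact contDiff_dd hf _

lemma contDiff_pdy {f : ℝ×ℝ→ℝ} (hf : ContDiff ℝ (⊤:ℕ∞) f) : ContDiff ℝ (⊤:ℕ∞) (pdy f) := by
  rw [show pdy f = dd ((0:ℝ),(1:ℝ)) f from funext (pdy_eq (diff_of_contDiff hf))]
  exact contDiff_dd hf _

lemma ibp_y {f : ℝ×ℝ→ℝ} (hf : ContDiff ℝ (⊤:ℕ∞) f) (hb : ∀ p ∈ bdry, f p = 0) :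
    ∫ p in disk, pdy f p = 0 := by
  have hdf := diff_of_contDiff hf
  have hc : Continuous (pdy f) := (contDiff_pdy hf).continuous
  have hint : Integrable (disk.indicator (pdy f)) volume :=
    (intg hc).integrable_indicator measurable_disk
  rw [← integral_indicator measurable_disk]
  rw [MeasureTheory.Measure.volume_eq_prod] at hint ⊢
  rw [MeasureTheory.integral_prod _ hint]
  have hinner : ∀ x : ℝ, (∫ y : ℝ, disk.indicator (pdy f) (x, y)) = 0 := by
    intro x
    have hrw : ∀ y : ℝ, disk.indicator (pdy f) (x,y)
        = Set.indicator {y : ℝ | x^2+y^2<1} (fun y => pdy f (x,y)) y := by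
      intro y
      by_cases h : x^2 + y^2 < 1
      · rw [Set.indicator_of_mem (by exact h), Set.indicator_of_mem (by exact h)]
      · rw [Set.indicator_of_notMem (by exact h), Set.indicator_of_notMem (by exact h)]
    rw [integral_congr_ae (Filter.Eventually.of_forall hrw)]
    have hms : MeasurableSet {y : ℝ | x^2+y^2<1} :=
      (isOpen_lt (by fun_prop) continuous_const).measurableSet
    rw [integral_indicator hms]
    by_cases hx : x^2 < 1
    · set s := Real.sqrt (1-x^2) with hs
      have hs0 : 0 ≤ s := Real.sqrt_nonneg _
      have hs2 : s^2 = 1-x^2 := Real.sq_sqrt (by linarith)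
      have hset : {y : ℝ | x^2+y^2<1} = Set.Ioo (-s) s := by
        ext y
        simp only [Set.mem_setOf_eq, Set.mem_Ioo]
        constructor
        · intro h
          have hy2 : y^2 < s^2 := by rw [hs2]; linarith
          constructor
          · by_contra hcon; push_neg at hcon; nlinarith
          · by_contra hcon; push_neg at hcon; nlinarith
        · rintro ⟨h1, h2⟩; nlinarith
      rw [hset, ← MeasureTheory.integral_Ioc_eq_integral_Ioo,
        ← intervalIntegral.integral_of_le (by linarith : -s ≤ s)]
      have key : (∫ y in (-s)..s, pdy f (x,y)) = f (x,s) - f (x,-s) := by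
        have hfun : (fun y => pdy f (x,y)) = deriv (fun y => f (x,y)) := rfl
        rw [hfun]
        apply intervalIntegral.integral_deriv_eq_sub
        · intro y _; exact (hasDerivAt_sec_y f hdf x y).differentiableAt
        · rw [← hfun]
          exact (hc.comp (by fun_prop)).intervalIntegrable _ _
      rw [key, hb (x,s) (by simp only [bdry, Set.mem_setOf_eq]; nlinarith),
        hb (x,-s) (by simp only [bdry, Set.mem_setOf_eq]; nlinarith), sub_zero]
    · have hset : {y : ℝ | x^2+y^2<1} = ∅ := by
        ext y; simp only [Set.mem_setOf_eq, Set.mem_empty_iff_false, iff_false]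
        push_neg at hx; nlinarith [sq_nonneg y]
      rw [hset]; simp
  simp only [hinner, integral_zero]

lemma ibp_x {f : ℝ×ℝ→ℝ} (hf : ContDiff ℝ (⊤:ℕ∞) f) (hb : ∀ p ∈ bdry, f p = 0) :
    ∫ p in disk, pdx f p = 0 := by
  have hdf := diff_of_contDiff hf
  have hc : Continuous (pdx f) := (contDiff_pdx hf).continuous
  have hint : Integrable (disk.indicator (pdx f)) volume :=
    (intg hc).integrable_indicator measurable_disk
  rw [← integral_indicator measurable_disk]
  rw [MeasureTheory.Measure.volume_eq_prod] at hint ⊢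
  rw [MeasureTheory.integral_prod_symm _ hint]
  have hinner : ∀ y : ℝ, (∫ x : ℝ, disk.indicator (pdx f) (x, y)) = 0 := by
    intro y
    have hrw : ∀ x : ℝ, disk.indicator (pdx f) (x,y)
        = Set.indicator {x : ℝ | x^2+y^2<1} (fun x => pdx f (x,y)) x := by
      intro x
      by_cases h : x^2 + y^2 < 1
      · rw [Set.indicator_of_mem (by exact h), Set.indicator_of_mem (by exact h)]
      · rw [Set.indicator_of_notMem (by exact h), Set.indicator_of_notMem (by exact h)]
    rw [integral_congr_ae (Filter.Eventually.of_forall hrw)]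
    have hms : MeasurableSet {x : ℝ | x^2+y^2<1} :=
      (isOpen_lt (by fun_prop) continuous_const).measurableSet
    rw [integral_indicator hms]
    by_cases hy : y^2 < 1
    · set s := Real.sqrt (1-y^2) with hs
      have hs0 : 0 ≤ s := Real.sqrt_nonneg _
      have hs2 : s^2 = 1-y^2 := Real.sq_sqrt (by linarith)
      have hset : {x : ℝ | x^2+y^2<1} = Set.Ioo (-s) s := by
        ext x
        simp only [Set.mem_setOf_eq, Set.mem_Ioo]
        constructor
        · intro h
          have hx2 : x^2 < s^2 := by rw [hs2]; linarith
          constructor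
          · by_contra hcon; push_neg at hcon; nlinarith
          · by_contra hcon; push_neg at hcon; nlinarith
        · rintro ⟨h1, h2⟩; nlinarith
      rw [hset, ← MeasureTheory.integral_Ioc_eq_integral_Ioo,
        ← intervalIntegral.integral_of_le (by linarith : -s ≤ s)]
      have key : (∫ x in (-s)..s, pdx f (x,y)) = f (s,y) - f (-s,y) := by
        have hfun : (fun x => pdx f (x,y)) = deriv (fun x => f (x,y)) := rfl
        rw [hfun]
        apply intervalIntegral.integral_deriv_eq_sub
        · intro x _; exact (hasDerivAt_sec_x f hdf x y).differentiableAt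
        · rw [← hfun]
          exact (hc.comp (by fun_prop)).intervalIntegrable _ _
      rw [key, hb (s,y) (by simp only [bdry, Set.mem_setOf_eq]; nlinarith),
        hb (-s,y) (by simp only [bdry, Set.mem_setOf_eq]; nlinarith), sub_zero]
    · have hset : {x : ℝ | x^2+y^2<1} = ∅ := by
        ext x; simp only [Set.mem_setOf_eq, Set.mem_empty_iff_false, iff_false]
        push_neg at hy; nlinarith [sq_nonneg x]
      rw [hset]; simp
  simp only [hinner, integral_zero]

def vt : ℝ×(ℝ×ℝ) := (1,(0,0))
def vx : ℝ×(ℝ×ℝ) := (0,(1,0))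
def vy : ℝ×(ℝ×ℝ) := (0,(0,1))

lemma hasDerivAt_sec_t (F : ℝ×(ℝ×ℝ)→ℝ) (hF : Differentiable ℝ F) (s : ℝ) (p : ℝ×ℝ) :
    HasDerivAt (fun s' => F (s',p)) (dd vt F (s,p)) s := by
  have h : HasDerivAt (fun s' => ((s',p) : ℝ×(ℝ×ℝ))) vt s :=
    (hasDerivAt_id s).prodMk (hasDerivAt_const s p)
  exact (hF (s,p)).hasFDerivAt.comp_hasDerivAt s h

lemma hasDerivAt_integral_disk (F : ℝ → ℝ×ℝ → ℝ)
    (hF : ContDiff ℝ (⊤:ℕ∞) (fun q : ℝ×(ℝ×ℝ) => F q.1 q.2)) (t : ℝ) :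
    HasDerivAt (fun s => ∫ p in disk, F s p)
      (∫ p in disk, dd vt (fun q : ℝ×(ℝ×ℝ) => F q.1 q.2) (t,p)) t := by
  set FJ : ℝ×(ℝ×ℝ) → ℝ := fun q => F q.1 q.2 with hFJ
  have hdF : Differentiable ℝ FJ := diff_of_contDiff hF
  have hG : Continuous (dd vt FJ) := (contDiff_dd hF vt).continuous
  have hsec : ∀ s : ℝ, Continuous (F s) := by
    intro s
    exact hF.continuous.comp (Continuous.prodMk_right s)
  obtain ⟨C, hC⟩ := (isCompact_Icc.prod compact_cdisk).exists_bound_of_continuousOn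
    (s := Set.Icc (t-1) (t+1) ×ˢ cdisk) hG.continuousOn
  have main := hasDerivAt_integral_of_dominated_loc_of_deriv_le
    (μ := volume.restrict disk) (F := F) (F' := fun s p => dd vt FJ (s,p))
    (x₀ := t) (bound := fun _ => C) (Metric.ball_mem_nhds t one_pos)
    (Filter.Eventually.of_forall fun s => (hsec s).aestronglyMeasurable)
    (intg (hsec t))
    ((hG.comp (Continuous.prodMk_right t)).aestronglyMeasurable)
    (by
      rw [ae_restrict_iff' measurable_disk]
      apply Filter.Eventually.of_forall
      intro p hp s hs
      rw [Metric.mem_ball, Real.dist_eq, abs_lt] at hs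
      have h1 : (s, p) ∈ Set.Icc (t-1) (t+1) ×ˢ cdisk := by
        rw [Set.mem_prod]
        exact ⟨Set.mem_Icc.2 ⟨by linarith [hs.1], by linarith [hs.2]⟩, (by simpa [cdisk] using le_of_lt (hp : p ∈ disk) : p ∈ cdisk)⟩
      exact hC _ h1)
    (integrableOn_const disk_vol_lt_top.ne)
    (by
      apply Filter.Eventually.of_forall
      intro p s _
      exact hasDerivAt_sec_t FJ hdF s p)
  exact main.2

lemma dd_comm {f : E → ℝ} (hf : ContDiff ℝ (⊤:ℕ∞) f) (u v : E) (x : E) :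
    dd u (dd v f) x = dd v (dd u f) x := by
  have hsymm := (hf.contDiffAt (x := x)).isSymmSndFDerivAt (n := ((⊤:ℕ∞) : WithTop ℕ∞))
    (by rw [minSmoothness_of_isRCLikeNormedField]; exact WithTop.coe_le_coe.2 le_top)
  have h1 : ContDiff ℝ (⊤:ℕ∞) (fderiv ℝ f) := (contDiff_infty_iff_fderiv.1 hf).2
  have hd : ∀ a : E, fderiv ℝ (fun x => fderiv ℝ f x a) x
      = (fderiv ℝ (fderiv ℝ f) x).flip a := by
    intro a
    have := fderiv_clm_apply (𝕜 := ℝ) (c := fderiv ℝ f) (u := fun _ : E => a) (x := x)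
      ((diff_of_contDiff h1).differentiableAt) (differentiableAt_const a)
    simp [this]
  unfold dd
  rw [hd v, hd u]
  simp only [ContinuousLinearMap.flip_apply]
  exact hsymm u v

lemma dd_comm_fun {f : E → ℝ} (hf : ContDiff ℝ (⊤:ℕ∞) f) (u v : E) :
    dd u (dd v f) = dd v (dd u f) := funext (dd_comm hf u v)

lemma pdx_mul {f g : ℝ×ℝ → ℝ} (hf : ContDiff ℝ (⊤:ℕ∞) f) (hg : ContDiff ℝ (⊤:ℕ∞) g)
    (p : ℝ×ℝ) : pdx (fun q => f q * g q) p = pdx f p * g p + f p * pdx g p := by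
  have h := ((hasDerivAt_sec_x f (diff_of_contDiff hf) p.1 p.2).mul
    (hasDerivAt_sec_x g (diff_of_contDiff hg) p.1 p.2)).deriv
  rw [pdx_eq (diff_of_contDiff hf) p, pdx_eq (diff_of_contDiff hg) p]
  exact h

lemma pdy_mul {f g : ℝ×ℝ → ℝ} (hf : ContDiff ℝ (⊤:ℕ∞) f) (hg : ContDiff ℝ (⊤:ℕ∞) g)
    (p : ℝ×ℝ) : pdy (fun q => f q * g q) p = pdy f p * g p + f p * pdy g p := by
  have h := ((hasDerivAt_sec_y f (diff_of_contDiff hf) p.1 p.2).mul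
    (hasDerivAt_sec_y g (diff_of_contDiff hg) p.1 p.2)).deriv
  rw [pdy_eq (diff_of_contDiff hf) p, pdy_eq (diff_of_contDiff hg) p]
  exact h

lemma iadd {f g : ℝ×ℝ → ℝ} (hf : Continuous f) (hg : Continuous g) :
    ∫ p in disk, (f p + g p) = (∫ p in disk, f p) + ∫ p in disk, g p :=
  integral_add (intg hf) (intg hg)

lemma isub {f g : ℝ×ℝ → ℝ} (hf : Continuous f) (hg : Continuous g) :
    ∫ p in disk, (f p - g p) = (∫ p in disk, f p) - ∫ p in disk, g p :=
  integral_sub (intg hf) (intg hg)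

lemma icmul (c : ℝ) (f : ℝ×ℝ → ℝ) :
    ∫ p in disk, c * f p = c * ∫ p in disk, f p :=
  integral_const_mul c f

lemma ibp_pair_x {f g : ℝ×ℝ → ℝ} (hf : ContDiff ℝ (⊤:ℕ∞) f) (hg : ContDiff ℝ (⊤:ℕ∞) g)
    (h0 : ∀ p ∈ bdry, f p * g p = 0) :
    ∫ p in disk, pdx f p * g p = - ∫ p in disk, f p * pdx g p := by
  have hz := ibp_x (hf.mul hg) h0
  have hcongr : ∀ p : ℝ×ℝ, pdx (fun q => f q * g q) p = pdx f p * g p + f p * pdx g p :=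
    pdx_mul hf hg
  rw [integral_congr_ae (Filter.Eventually.of_forall hcongr)] at hz
  rw [iadd (((contDiff_pdx hf).mul hg).continuous) ((hf.mul (contDiff_pdx hg)).continuous)] at hz
  linarith

lemma ibp_pair_y {f g : ℝ×ℝ → ℝ} (hf : ContDiff ℝ (⊤:ℕ∞) f) (hg : ContDiff ℝ (⊤:ℕ∞) g)
    (h0 : ∀ p ∈ bdry, f p * g p = 0) :
    ∫ p in disk, pdy f p * g p = - ∫ p in disk, f p * pdy g p := by
  have hz := ibp_y (hf.mul hg) h0
  have hcongr : ∀ p : ℝ×ℝ, pdy (fun q => f q * g q) p = pdy f p * g p + f p * pdy g p :=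
    pdy_mul hf hg
  rw [integral_congr_ae (Filter.Eventually.of_forall hcongr)] at hz
  rw [iadd (((contDiff_pdy hf).mul hg).continuous) ((hf.mul (contDiff_pdy hg)).continuous)] at hz
  linarith

lemma pdx_pdy_comm {f : ℝ×ℝ → ℝ} (hf : ContDiff ℝ (⊤:ℕ∞) f) (p : ℝ×ℝ) :
    pdx (pdy f) p = pdy (pdx f) p := by
  have h1 : pdy f = dd ((0:ℝ),(1:ℝ)) f := funext (pdy_eq (diff_of_contDiff hf))
  have h2 : pdx f = dd ((1:ℝ),(0:ℝ)) f := funext (pdx_eq (diff_of_contDiff hf))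
  rw [pdx_eq (diff_of_contDiff (h1 ▸ contDiff_dd hf _)) p,
      pdy_eq (diff_of_contDiff (h2 ▸ contDiff_dd hf _)) p, h1, h2]
  exact dd_comm hf _ _ p

lemma pdx_sec (G : ℝ×(ℝ×ℝ)→ℝ) (hG : Differentiable ℝ G) (s : ℝ) (p : ℝ×ℝ) :
    pdx (fun q => G (s,q)) p = dd vx G (s,p) := by
  have h : HasDerivAt (fun x => ((s,(x,p.2)) : ℝ×(ℝ×ℝ))) vx p.1 :=
    (hasDerivAt_const p.1 s).prodMk ((hasDerivAt_id p.1).prodMk (hasDerivAt_const p.1 p.2))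
  exact ((hG (s,p)).hasFDerivAt.comp_hasDerivAt p.1 h).deriv

lemma pdy_sec (G : ℝ×(ℝ×ℝ)→ℝ) (hG : Differentiable ℝ G) (s : ℝ) (p : ℝ×ℝ) :
    pdy (fun q => G (s,q)) p = dd vy G (s,p) := by
  have h : HasDerivAt (fun y => ((s,(p.1,y)) : ℝ×(ℝ×ℝ))) vy p.2 :=
    (hasDerivAt_const p.2 s).prodMk ((hasDerivAt_const p.2 p.1).prodMk (hasDerivAt_id p.2))
  exact ((hG (s,p)).hasFDerivAt.comp_hasDerivAt p.2 h).deriv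

lemma sec_contDiff {G : ℝ×(ℝ×ℝ)→ℝ} (hG : ContDiff ℝ (⊤:ℕ∞) G) (s : ℝ) :
    ContDiff ℝ (⊤:ℕ∞) (fun p => G (s,p)) :=
  hG.comp (contDiff_const.prodMk contDiff_id)

lemma contDiff_lap {f : ℝ×ℝ→ℝ} (hf : ContDiff ℝ (⊤:ℕ∞) f) :
    ContDiff ℝ (⊤:ℕ∞) (lap f) :=
  (contDiff_pdx (contDiff_pdx hf)).add (contDiff_pdy (contDiff_pdy hf))

lemma pdx_sub_cmul {f g : ℝ×ℝ→ℝ} (hf : ContDiff ℝ (⊤:ℕ∞) f) (hg : ContDiff ℝ (⊤:ℕ∞) g)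
    (c : ℝ) (p : ℝ×ℝ) :
    pdx (fun q => f q - c * g q) p = pdx f p - c * pdx g p := by
  have h := ((hasDerivAt_sec_x f (diff_of_contDiff hf) p.1 p.2).sub
    ((hasDerivAt_sec_x g (diff_of_contDiff hg) p.1 p.2).const_mul c)).deriv
  rw [pdx_eq (diff_of_contDiff hf) p, pdx_eq (diff_of_contDiff hg) p]
  exact h

lemma pdy_sub_cmul {f g : ℝ×ℝ→ℝ} (hf : ContDiff ℝ (⊤:ℕ∞) f) (hg : ContDiff ℝ (⊤:ℕ∞) g)
    (c : ℝ) (p : ℝ×ℝ) :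
    pdy (fun q => f q - c * g q) p = pdy f p - c * pdy g p := by
  have h := ((hasDerivAt_sec_y f (diff_of_contDiff hf) p.1 p.2).sub
    ((hasDerivAt_sec_y g (diff_of_contDiff hg) p.1 p.2).const_mul c)).deriv
  rw [pdy_eq (diff_of_contDiff hf) p, pdy_eq (diff_of_contDiff hg) p]
  exact h

/-- The axial-velocity energy identity:
`(1/2) d/dt(‖w‖² + ε‖∇w‖²) = −(1/R)‖∇w‖² + R⟨ψ_θ, w⟩ + ε⟨J(Δw,ψ), w⟩`. -/
theorem axial_energy_identity (ε R : ℝ) (hε : 0 ≤ ε) (hR : 0 < R)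
    (w ψ : ℝ → ℝ × ℝ → ℝ)
    (hw : ContDiff ℝ (⊤ : ℕ∞) (fun q : ℝ × (ℝ × ℝ) => w q.1 q.2))
    (hψ : ContDiff ℝ (⊤ : ℕ∞) (fun q : ℝ × (ℝ × ℝ) => ψ q.1 q.2))
    (heq : ∀ t : ℝ, ∀ p ∈ disk,
      deriv (fun s => w s p - ε * lap (w s) p) t
        = (1 / R) * lap (w t) p + R * azim (ψ t) p
          + jac (ψ t) (fun q => w t q - ε * lap (w t) q) p)
    (hbc : ∀ t : ℝ, ∀ p ∈ bdry, w t p = 0 ∧ ψ t p = 0) :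
    ∀ t : ℝ,
      (1 / 2) * deriv (fun s => nsq (w s) + ε * gradNsq (w s)) t
        = -(1 / R) * gradNsq (w t) + R * ip (azim (ψ t)) (w t)
          + ε * ip (jac (lap (w t)) (ψ t)) (w t) := by
  intro t
  set W : ℝ × (ℝ × ℝ) → ℝ := fun q => w q.1 q.2 with hWdef
  have hWd : Differentiable ℝ W := diff_of_contDiff hw
  have hsecw : ∀ s, ContDiff ℝ (⊤:ℕ∞) (w s) := fun s => sec_contDiff hw s
  have hsecψ : ∀ s, ContDiff ℝ (⊤:ℕ∞) (ψ s) := fun s => sec_contDiff hψ s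
  set u : ℝ × ℝ → ℝ := fun p => dd vt W (t,p) with hudef
  have hcu : ContDiff ℝ (⊤:ℕ∞) u := sec_contDiff (contDiff_dd hw vt) t
  have hub : ∀ p ∈ bdry, u p = 0 := by
    intro p hp
    have h1 : u p = deriv (fun s => W (s,p)) t := (hasDerivAt_sec_t W hWd t p).deriv.symm
    have h2 : (fun s => W (s,p)) = fun _ => (0:ℝ) := funext fun s => (hbc s p hp).1
    rw [h1, h2, deriv_const]
  have hwb : ∀ p ∈ bdry, w t p = 0 := fun p hp => (hbc t p hp).1
  -- continuity library
  have hcw : Continuous (w t) := (hsecw t).continuous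
  have hcwx : Continuous (pdx (w t)) := (contDiff_pdx (hsecw t)).continuous
  have hcwy : Continuous (pdy (w t)) := (contDiff_pdy (hsecw t)).continuous
  have hcuc : Continuous u := hcu.continuous
  have hcux : Continuous (pdx u) := (contDiff_pdx hcu).continuous
  have hcuy : Continuous (pdy u) := (contDiff_pdy hcu).continuous
  have hclap : Continuous (lap (w t)) := (contDiff_lap (hsecw t)).continuous
  have hclapu : Continuous (lap u) := (contDiff_lap hcu).continuous
  have hcwxx : Continuous (pdx (pdx (w t))) := (contDiff_pdx (contDiff_pdx (hsecw t))).continuous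
  have hcwyy : Continuous (pdy (pdy (w t))) := (contDiff_pdy (contDiff_pdy (hsecw t))).continuous
  have hcuxx : Continuous (pdx (pdx u)) := (contDiff_pdx (contDiff_pdx hcu)).continuous
  have hcuyy : Continuous (pdy (pdy u)) := (contDiff_pdy (contDiff_pdy hcu)).continuous
  have hcψx : Continuous (pdx (ψ t)) := (contDiff_pdx (hsecψ t)).continuous
  have hcψy : Continuous (pdy (ψ t)) := (contDiff_pdy (hsecψ t)).continuous
  have hWdd : ∀ v, Differentiable ℝ (dd v W) := fun v => diff_of_contDiff (contDiff_dd hw v)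
  have hpdxw : ∀ s, pdx (w s) = fun q => dd vx W (s,q) := fun s => funext (pdx_sec W hWd s)
  have hpdyw : ∀ s, pdy (w s) = fun q => dd vy W (s,q) := fun s => funext (pdy_sec W hWd s)
  have hlapw : ∀ s, ∀ q, lap (w s) q = dd vx (dd vx W) (s,q) + dd vy (dd vy W) (s,q) := by
    intro s q
    show pdx (pdx (w s)) q + pdy (pdy (w s)) q = _
    rw [hpdxw s, hpdyw s, pdx_sec (dd vx W) (hWdd vx) s q, pdy_sec (dd vy W) (hWdd vy) s q]
  have hpdxu : pdx u = fun q => dd vx (dd vt W) (t,q) := funext (pdx_sec (dd vt W) (hWdd vt) t)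
  have hpdyu : pdy u = fun q => dd vy (dd vt W) (t,q) := funext (pdy_sec (dd vt W) (hWdd vt) t)
  have hlapu : ∀ q, lap u q = dd vx (dd vx (dd vt W)) (t,q) + dd vy (dd vy (dd vt W)) (t,q) := by
    intro q
    show pdx (pdx u) q + pdy (pdy u) q = _
    rw [hpdxu, hpdyu, pdx_sec (dd vx (dd vt W)) (diff_of_contDiff (contDiff_dd (contDiff_dd hw vt) vx)) t q,
      pdy_sec (dd vy (dd vt W)) (diff_of_contDiff (contDiff_dd (contDiff_dd hw vt) vy)) t q]
  have hcommx : dd vx (dd vx (dd vt W)) = dd vt (dd vx (dd vx W)) := by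
    rw [dd_comm_fun hw vx vt, dd_comm_fun (contDiff_dd hw vx) vx vt]
  have hcommy : dd vy (dd vy (dd vt W)) = dd vt (dd vy (dd vy W)) := by
    rw [dd_comm_fun hw vy vt, dd_comm_fun (contDiff_dd hw vy) vy vt]
  have step1 : deriv (fun s => nsq (w s) + ε * gradNsq (w s)) t
      = ∫ p in disk, (2*(w t p * u p)
          + (2*ε)*(pdx (w t) p * pdx u p + pdy (w t) p * pdy u p)) := by
    set FJ : ℝ × (ℝ × ℝ) → ℝ :=
      fun q => (W q)^2 + ε * ((dd vx W q)^2 + (dd vy W q)^2) with hFJdef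
    have hFJcd : ContDiff ℝ (⊤:ℕ∞) FJ :=
      (hw.pow 2).add (contDiff_const.mul
        (((contDiff_dd hw vx).pow 2).add ((contDiff_dd hw vy).pow 2)))
    have hFJd : Differentiable ℝ FJ := diff_of_contDiff hFJcd
    have hEF : (fun s => nsq (w s) + ε * gradNsq (w s)) = fun s => ∫ p in disk, FJ (s,p) := by
      funext s
      have hx : nsq (pdx (w s)) = ∫ p in disk, (dd vx W (s,p))^2 := by
        rw [show nsq (pdx (w s)) = ∫ p in disk, (pdx (w s) p)^2 from rfl, hpdxw s]
      have hy : nsq (pdy (w s)) = ∫ p in disk, (dd vy W (s,p))^2 := by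
        rw [show nsq (pdy (w s)) = ∫ p in disk, (pdy (w s) p)^2 from rfl, hpdyw s]
      have hcx : Continuous (fun p => (dd vx W (s,p))^2) :=
        ((sec_contDiff (contDiff_dd hw vx) s).pow 2).continuous
      have hcy : Continuous (fun p => (dd vy W (s,p))^2) :=
        ((sec_contDiff (contDiff_dd hw vy) s).pow 2).continuous
      have hcw2 : Continuous (fun p => (w s p)^2) := ((hsecw s).pow 2).continuous
      rw [show (∫ p in disk, FJ (s,p))
          = ∫ p in disk, ((w s p)^2 + ε * ((dd vx W (s,p))^2 + (dd vy W (s,p))^2)) from rfl,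
        iadd hcw2 (by fun_prop), icmul, iadd hcx hcy]
      rw [show nsq (w s) = ∫ p in disk, (w s p)^2 from rfl, show gradNsq (w s) = nsq (pdx (w s)) + nsq (pdy (w s)) from rfl,
        hx, hy]
    have hderiv := hasDerivAt_integral_disk (fun s p => FJ (s,p)) (by exact hFJcd) t
    have hpt : ∀ p : ℝ × ℝ, dd vt (fun q : ℝ × (ℝ×ℝ) => FJ (q.1, q.2)) (t,p)
        = 2*(w t p * u p) + (2*ε)*(pdx (w t) p * pdx u p + pdy (w t) p * pdy u p) := by
      intro p
      have h1 := hasDerivAt_sec_t W hWd t p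
      have hx := hasDerivAt_sec_t (dd vx W) (hWdd vx) t p
      have hy := hasDerivAt_sec_t (dd vy W) (hWdd vy) t p
      have hcomb := (h1.fun_pow 2).fun_add (((hx.fun_pow 2).fun_add (hy.fun_pow 2)).const_mul ε)
      have heqf : dd vt (fun q : ℝ × (ℝ×ℝ) => FJ (q.1, q.2)) (t,p)
          = deriv (fun s => FJ (s,p)) t := by
        exact (hasDerivAt_sec_t (fun q => FJ (q.1,q.2)) (by exact hFJd) t p).deriv.symm
      rw [heqf, hcomb.deriv]
      have e1 : pdx (w t) p = dd vx W (t,p) := by rw [hpdxw t]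
      have e2 : pdy (w t) p = dd vy W (t,p) := by rw [hpdyw t]
      have e3 : pdx u p = dd vt (dd vx W) (t,p) := by
        rw [hpdxu]
        exact dd_comm hw vx vt (t,p)
      have e4 : pdy u p = dd vt (dd vy W) (t,p) := by
        rw [hpdyu]
        exact dd_comm hw vy vt (t,p)
      rw [e1, e2, e3, e4]
      push_cast
      ring
    rw [hEF, hderiv.deriv]
    exact integral_congr_ae (Filter.Eventually.of_forall hpt)
  have nxx : ∫ p in disk, pdx (w t) p * pdx u p = - ∫ p in disk, pdx (pdx (w t)) p * u p := by
    have h := ibp_pair_x (contDiff_pdx (hsecw t)) hcu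
      (fun p hp => by rw [hub p hp, mul_zero])
    linarith
  have nyy : ∫ p in disk, pdy (w t) p * pdy u p = - ∫ p in disk, pdy (pdy (w t)) p * u p := by
    have h := ibp_pair_y (contDiff_pdy (hsecw t)) hcu
      (fun p hp => by rw [hub p hp, mul_zero])
    linarith
  have step2 : ∫ p in disk, (pdx (w t) p * pdx u p + pdy (w t) p * pdy u p)
      = - ∫ p in disk, lap (w t) p * u p := by
    rw [iadd (by fun_prop) (by fun_prop), nxx, nyy]
    have hsplit : ∫ p in disk, lap (w t) p * u p
        = (∫ p in disk, pdx (pdx (w t)) p * u p) + ∫ p in disk, pdy (pdy (w t)) p * u p := by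
      rw [← iadd (by fun_prop) (by fun_prop)]
      exact integral_congr_ae (Filter.Eventually.of_forall fun p => by
        simp only [lap]; ring)
    rw [hsplit]; ring
  have step3 : ∫ p in disk, lap (w t) p * u p = ∫ p in disk, w t p * lap u p := by
    have hx1 := ibp_pair_x (contDiff_pdx (hsecw t)) hcu
      (fun p hp => by rw [hub p hp, mul_zero])
    have hx2 := ibp_pair_x (hsecw t) (contDiff_pdx hcu)
      (fun p hp => by rw [hwb p hp, zero_mul])
    have hy1 := ibp_pair_y (contDiff_pdy (hsecw t)) hcu
      (fun p hp => by rw [hub p hp, mul_zero])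
    have hy2 := ibp_pair_y (hsecw t) (contDiff_pdy hcu)
      (fun p hp => by rw [hwb p hp, zero_mul])
    have hsplit : ∫ p in disk, lap (w t) p * u p
        = (∫ p in disk, pdx (pdx (w t)) p * u p) + ∫ p in disk, pdy (pdy (w t)) p * u p := by
      rw [← iadd (by fun_prop) (by fun_prop)]
      exact integral_congr_ae (Filter.Eventually.of_forall fun p => by
        simp only [lap]; ring)
    have hsplit2 : ∫ p in disk, w t p * lap u p
        = (∫ p in disk, w t p * pdx (pdx u) p) + ∫ p in disk, w t p * pdy (pdy u) p := by
      rw [← iadd (by fun_prop) (by fun_prop)]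
      exact integral_congr_ae (Filter.Eventually.of_forall fun p => by
        simp only [lap]; ring)
    rw [hsplit, hsplit2]
    linarith
  have step4 : ∀ p ∈ disk, u p - ε * lap u p
      = (1/R) * lap (w t) p + R * azim (ψ t) p
        + (jac (ψ t) (w t) p + ε * jac (lap (w t)) (ψ t) p) := by
    intro p hp
    have hfun : (fun s => w s p - ε * lap (w s) p)
        = fun s => W (s,p) - ε * (dd vx (dd vx W) (s,p) + dd vy (dd vy W) (s,p)) :=
      funext fun s => by rw [hlapw s p]
    have hder : HasDerivAt (fun s => W (s,p) - ε * (dd vx (dd vx W) (s,p) + dd vy (dd vy W) (s,p)))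
        (dd vt W (t,p) - ε * (dd vt (dd vx (dd vx W)) (t,p) + dd vt (dd vy (dd vy W)) (t,p))) t :=
      (hasDerivAt_sec_t W hWd t p).sub
        (((hasDerivAt_sec_t (dd vx (dd vx W)) (diff_of_contDiff (contDiff_dd (contDiff_dd hw vx) vx)) t p).add
          (hasDerivAt_sec_t (dd vy (dd vy W)) (diff_of_contDiff (contDiff_dd (contDiff_dd hw vy) vy)) t p)).const_mul ε)
    have hd : deriv (fun s => w s p - ε * lap (w s) p) t = u p - ε * lap u p := by
      rw [hfun, hder.deriv, hlapu p, hcommx, hcommy]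
    have hjac : jac (ψ t) (fun q => w t q - ε * lap (w t) q) p
        = jac (ψ t) (w t) p + ε * jac (lap (w t)) (ψ t) p := by
      simp only [jac]
      rw [pdx_sub_cmul (hsecw t) (contDiff_lap (hsecw t)) ε p,
          pdy_sub_cmul (hsecw t) (contDiff_lap (hsecw t)) ε p]
      ring
    rw [← hd, heq t p hp, hjac]
  have step5 : ∫ p in disk, w t p * lap (w t) p = -gradNsq (w t) := by
    have hx := ibp_pair_x (hsecw t) (contDiff_pdx (hsecw t))
      (fun p hp => by rw [hwb p hp, zero_mul])
    have hy := ibp_pair_y (hsecw t) (contDiff_pdy (hsecw t))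
      (fun p hp => by rw [hwb p hp, zero_mul])
    have hsplit : ∫ p in disk, w t p * lap (w t) p
        = (∫ p in disk, w t p * pdx (pdx (w t)) p) + ∫ p in disk, w t p * pdy (pdy (w t)) p := by
      rw [← iadd (by fun_prop) (by fun_prop)]
      exact integral_congr_ae (Filter.Eventually.of_forall fun p => by
        simp only [lap]; ring)
    have hnx : nsq (pdx (w t)) = ∫ p in disk, pdx (w t) p * pdx (w t) p :=
      integral_congr_ae (Filter.Eventually.of_forall fun p => sq (pdx (w t) p))
    have hny : nsq (pdy (w t)) = ∫ p in disk, pdy (w t) p * pdy (w t) p :=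
      integral_congr_ae (Filter.Eventually.of_forall fun p => sq (pdy (w t) p))
    have hg : gradNsq (w t) = nsq (pdx (w t)) + nsq (pdy (w t)) := rfl
    rw [hsplit, hg, hnx, hny]
    linarith
  have step6 : ∫ p in disk, w t p * jac (ψ t) (w t) p = 0 := by
    have hA : ContDiff ℝ (⊤:ℕ∞) (fun p => pdx (ψ t) p * (w t p * w t p)) :=
      (contDiff_pdx (hsecψ t)).mul ((hsecw t).mul (hsecw t))
    have hB : ContDiff ℝ (⊤:ℕ∞) (fun p => pdy (ψ t) p * (w t p * w t p)) :=
      (contDiff_pdy (hsecψ t)).mul ((hsecw t).mul (hsecw t))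
    have hzA : ∫ p in disk, pdy (fun p => pdx (ψ t) p * (w t p * w t p)) p = 0 :=
      ibp_y hA (fun p hp => by rw [hwb p hp]; ring)
    have hzB : ∫ p in disk, pdx (fun p => pdy (ψ t) p * (w t p * w t p)) p = 0 :=
      ibp_x hB (fun p hp => by rw [hwb p hp]; ring)
    have hcpA : Continuous (pdy (fun p => pdx (ψ t) p * (w t p * w t p))) :=
      (contDiff_pdy hA).continuous
    have hcpB : Continuous (pdx (fun p => pdy (ψ t) p * (w t p * w t p))) :=
      (contDiff_pdx hB).continuous
    have hpt : ∀ p : ℝ×ℝ, pdy (fun p => pdx (ψ t) p * (w t p * w t p)) p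
        - pdx (fun p => pdy (ψ t) p * (w t p * w t p)) p
        = 2 * (w t p * jac (ψ t) (w t) p) := by
      intro p
      rw [pdy_mul (contDiff_pdx (hsecψ t)) ((hsecw t).mul (hsecw t)) p,
          pdx_mul (contDiff_pdy (hsecψ t)) ((hsecw t).mul (hsecw t)) p,
          pdy_mul (hsecw t) (hsecw t) p, pdx_mul (hsecw t) (hsecw t) p,
          pdx_pdy_comm (hsecψ t) p]
      simp only [jac]; ring
    have hz : ∫ p in disk, (pdy (fun p => pdx (ψ t) p * (w t p * w t p)) p
        - pdx (fun p => pdy (ψ t) p * (w t p * w t p)) p) = 0 := by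
      rw [isub hcpA hcpB, hzA, hzB]; ring
    rw [integral_congr_ae (Filter.Eventually.of_forall hpt)] at hz
    rw [icmul] at hz
    linarith
  -- assembly
  have hsplit1 : ∫ p in disk, (2*(w t p * u p)
        + (2*ε)*(pdx (w t) p * pdx u p + pdy (w t) p * pdy u p))
      = 2*(∫ p in disk, w t p * u p)
        + (2*ε)*(∫ p in disk, (pdx (w t) p * pdx u p + pdy (w t) p * pdy u p)) := by
    rw [iadd (by fun_prop) (by fun_prop), icmul, icmul]
  have key : (∫ p in disk, w t p * u p) - ε * (∫ p in disk, lap (w t) p * u p)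
      = ∫ p in disk, w t p * (u p - ε * lap u p) := by
    rw [step3]
    rw [show (fun p => w t p * (u p - ε * lap u p))
        = fun p => w t p * u p - ε * (w t p * lap u p) from funext fun p => by ring]
    rw [isub (by fun_prop) (by fun_prop), icmul]
  have key2 : ∫ p in disk, w t p * (u p - ε * lap u p)
      = ∫ p in disk, w t p * ((1/R) * lap (w t) p + R * azim (ψ t) p
          + (jac (ψ t) (w t) p + ε * jac (lap (w t)) (ψ t) p)) := by
    apply MeasureTheory.setIntegral_congr_fun measurable_disk
    intro p hp
    dsimp only
    rw [step4 p hp]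
  have hcazim : Continuous (azim (ψ t)) := by
    have : azim (ψ t) = fun p => p.1 * pdy (ψ t) p - p.2 * pdx (ψ t) p := rfl
    rw [this]; fun_prop
  have hcjac1 : Continuous (jac (ψ t) (w t)) := by
    have : jac (ψ t) (w t) = fun p => pdx (ψ t) p * pdy (w t) p - pdy (ψ t) p * pdx (w t) p := rfl
    rw [this]; fun_prop
  have hcjac2 : Continuous (jac (lap (w t)) (ψ t)) := by
    have : jac (lap (w t)) (ψ t)
      = fun p => pdx (lap (w t)) p * pdy (ψ t) p - pdy (lap (w t)) p * pdx (ψ t) p := rfl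
    have hx : Continuous (pdx (lap (w t))) := (contDiff_pdx (contDiff_lap (hsecw t))).continuous
    have hy : Continuous (pdy (lap (w t))) := (contDiff_pdy (contDiff_lap (hsecw t))).continuous
    rw [this]; fun_prop
  have key3 : ∫ p in disk, w t p * ((1/R) * lap (w t) p + R * azim (ψ t) p
          + (jac (ψ t) (w t) p + ε * jac (lap (w t)) (ψ t) p))
      = (1/R) * (∫ p in disk, w t p * lap (w t) p)
        + R * (∫ p in disk, w t p * azim (ψ t) p)
        + ((∫ p in disk, w t p * jac (ψ t) (w t) p)
          + ε * (∫ p in disk, w t p * jac (lap (w t)) (ψ t) p)) := by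
    rw [show (fun p => w t p * ((1/R) * lap (w t) p + R * azim (ψ t) p
          + (jac (ψ t) (w t) p + ε * jac (lap (w t)) (ψ t) p)))
        = fun p => (1/R) * (w t p * lap (w t) p) + R * (w t p * azim (ψ t) p)
          + (w t p * jac (ψ t) (w t) p + ε * (w t p * jac (lap (w t)) (ψ t) p))
        from funext fun p => by ring]
    rw [iadd (by fun_prop) (by fun_prop), iadd (by fun_prop) (by fun_prop),
      iadd (by fun_prop) (by fun_prop), icmul, icmul, icmul]
  have hip1 : ∫ p in disk, w t p * azim (ψ t) p = ip (azim (ψ t)) (w t) := by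
    exact integral_congr_ae (Filter.Eventually.of_forall fun p => mul_comm _ _)
  have hip2 : ∫ p in disk, w t p * jac (lap (w t)) (ψ t) p = ip (jac (lap (w t)) (ψ t)) (w t) := by
    exact integral_congr_ae (Filter.Eventually.of_forall fun p => mul_comm _ _)
  calc (1/2) * deriv (fun s => nsq (w s) + ε * gradNsq (w s)) t
      = (1/2) * (2*(∫ p in disk, w t p * u p)
          + (2*ε)*(∫ p in disk, (pdx (w t) p * pdx u p + pdy (w t) p * pdy u p))) := by
        rw [step1, hsplit1]
    _ = (∫ p in disk, w t p * u p)
          + ε * (∫ p in disk, (pdx (w t) p * pdx u p + pdy (w t) p * pdy u p)) := by ring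
    _ = (∫ p in disk, w t p * u p) - ε * (∫ p in disk, lap (w t) p * u p) := by
        rw [step2]; ring
    _ = ∫ p in disk, w t p * (u p - ε * lap u p) := key
    _ = _ := key2
    _ = _ := key3
    _ = -(1/R) * gradNsq (w t) + R * ip (azim (ψ t)) (w t)
          + ε * ip (jac (lap (w t)) (ψ t)) (w t) := by
        rw [step5, step6, hip1, hip2]; ring
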